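/- In the AMF framework with T ≥ ln d and η = √(ln d / (4TC²)), suppose the Learner plays arbitrary (not necessarily minimax-optimal) actions x^1, …, x^T, and for each round t let w^t_bd be any real with ψ^t(x^t) ≤ w^t_bd ≤ C, where ψ^t(x) := max_{y∈Y^t} Σ_{j∈[d]} χ^t_j · ℓ^t_j(x, y). Then against any Adversary's choices y^1, …, y^T, max_{j∈[d]} Σ_{t=1}^T ℓ^t_j(x^t, y^t) ≤ Σ_{t=1}^T w^t_bd + 4C·√(T·ln d). -/

import Mathlib

open scoped BigOperators

noncomputable section

/-- Finite-dimensional Euclidean space. -/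
abbrev Euc (n : ℕ) := EuclideanSpace ℝ (Fin n)

/-- The exponential weight on coordinate `j` at round `t`:
`χ^t_j = exp(η Σ_{s<t} ℓ^s_j(x^s,y^s)) / Σ_i exp(η Σ_{s<t} ℓ^s_i(x^s,y^s))`. -/
noncomputable def chiWeight {T d N M : ℕ} (η : ℝ)
    (ℓ : Fin T → Euc N → Euc M → Fin d → ℝ)
    (x : Fin T → Euc N) (y : Fin T → Euc M) (t : Fin T) (j : Fin d) : ℝ :=
  Real.exp (η * ∑ s ∈ Finset.Iio t, ℓ s (x s) (y s) j) /
    ∑ i : Fin d, Real.exp (η * ∑ s ∈ Finset.Iio t, ℓ s (x s) (y s) i)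

/-- The objective of the Learner's stage game at round `t`:
`ψ^t(x') = max_{y ∈ Y^t} Σ_j χ^t_j · ℓ^t_j(x', y)`. -/
noncomputable def stageObjective {T d N M : ℕ} (η : ℝ)
    (Y : Fin T → Set (Euc M)) (ℓ : Fin T → Euc N → Euc M → Fin d → ℝ)
    (x : Fin T → Euc N) (y : Fin T → Euc M) (t : Fin T) (x' : Euc N) : ℝ :=
  sSup ((fun yy => ∑ j : Fin d, chiWeight η ℓ x y t j * ℓ t x' yy j) '' Y t)

private lemma exp_le_quad {a : ℝ} (h : |a| ≤ 1) : Real.exp a ≤ 1 + a + a ^ 2 := by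
  have hb := Real.exp_bound h (n := 2) (by norm_num)
  have h1 : ∑ m ∈ Finset.range 2, a ^ m / m.factorial = 1 + a := by
    simp [Finset.sum_range_succ]
  rw [h1] at hb
  have h2 := (abs_sub_le_iff.mp hb).1
  have hsq : |a| ^ 2 = a ^ 2 := sq_abs a
  norm_num at h2
  nlinarith [h2, hsq]

private lemma sum_Iio_fin {T : ℕ} (f : Fin T → ℝ) (t : Fin T) :
    ∑ s ∈ Finset.Iio t, f s
      = ∑ k ∈ Finset.range (t : ℕ), if h : k < T then f ⟨k, h⟩ else 0 := by
  refine Finset.sum_bij' (fun (s : Fin T) _ => (s : ℕ))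
    (fun k hk => (⟨k, (Finset.mem_range.mp hk).trans t.isLt⟩ : Fin T)) ?_ ?_ ?_ ?_ ?_
  · intro a ha
    simpa [Finset.mem_range] using (Finset.mem_Iio.mp ha)
  · intro k hk
    simpa [Finset.mem_Iio, Fin.lt_def] using Finset.mem_range.mp hk
  · intro a ha; simp
  · intro k hk; simp
  · intro a ha
    simp [a.isLt]

/-- **bounds for a suboptimal Learner, deterministic case.**
With `T ≥ ln d` and `η = √(ln d/(4TC²))`, if the Learner plays arbitrary actions
`x^1, …, x^T` and `w^t_bd` are achieved AMF value bounds, i.e.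
`ψ^t(x^t) ≤ w^t_bd ≤ C`, then against any Adversary
`max_j Σ_t ℓ^t_j(x^t,y^t) ≤ Σ_t w^t_bd + 4C√(T ln d)`. -/
theorem amf_suboptimal_learner_bound
    (T d N M : ℕ) (hd : 1 ≤ d) (C : ℝ) (hC : 0 < C)
    (X : Fin T → Set (Euc N)) (Y : Fin T → Set (Euc M))
    (ℓ : Fin T → Euc N → Euc M → Fin d → ℝ)
    (hXconv : ∀ t, Convex ℝ (X t)) (hXcomp : ∀ t, IsCompact (X t))
    (hXne : ∀ t, (X t).Nonempty)
    (hYconv : ∀ t, Convex ℝ (Y t)) (hYcomp : ∀ t, IsCompact (Y t))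
    (hYne : ∀ t, (Y t).Nonempty)
    (hcont : ∀ t j, ContinuousOn (fun p : Euc N × Euc M => ℓ t p.1 p.2 j) (X t ×ˢ Y t))
    (hbdd : ∀ t j, ∀ x ∈ X t, ∀ y ∈ Y t, |ℓ t x y j| ≤ C)
    (hconv : ∀ t j, ∀ y ∈ Y t, ConvexOn ℝ (X t) (fun x => ℓ t x y j))
    (hconc : ∀ t j, ∀ x ∈ X t, ConcaveOn ℝ (Y t) (fun y => ℓ t x y j))
    (hT : Real.log d ≤ T)
    (η : ℝ) (hη : η = Real.sqrt (Real.log d / (4 * T * C ^ 2)))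
    (x : Fin T → Euc N) (y : Fin T → Euc M)
    (hx : ∀ t, x t ∈ X t) (hy : ∀ t, y t ∈ Y t)
    (wbd : Fin T → ℝ)
    (hwbd : ∀ t, stageObjective η Y ℓ x y t (x t) ≤ wbd t ∧ wbd t ≤ C) :
    (⨆ j : Fin d, ∑ t, ℓ t (x t) (y t) j) ≤
      (∑ t, wbd t) + 4 * C * Real.sqrt (T * Real.log d) := by
  classical
  haveI : Nonempty (Fin d) := ⟨⟨0, by omega⟩⟩
  have hD0 : (0:ℝ) ≤ Real.log d := Real.log_nonneg (by exact_mod_cast hd)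
  -- positivity of the chiWeight denominator
  have hden_pos : ∀ t : Fin T,
      0 < ∑ i : Fin d, Real.exp (η * ∑ s ∈ Finset.Iio t, ℓ s (x s) (y s) i) :=
    fun t => Finset.sum_pos (fun i _ => Real.exp_pos _) Finset.univ_nonempty
  have hchi_pos : ∀ (t : Fin T) (j : Fin d), 0 < chiWeight η ℓ x y t j :=
    fun t j => div_pos (Real.exp_pos _) (hden_pos t)
  have hchi_sum : ∀ t : Fin T, ∑ j : Fin d, chiWeight η ℓ x y t j = 1 := by
    intro t
    simp only [chiWeight]
    rw [← Finset.sum_div, div_self (ne_of_gt (hden_pos t))]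
  -- key per-round inequality
  have hkey : ∀ t : Fin T,
      ∑ j : Fin d, chiWeight η ℓ x y t j * ℓ t (x t) (y t) j ≤ wbd t := by
    intro t
    refine le_trans ?_ (hwbd t).1
    refine le_csSup ⟨C, ?_⟩ ⟨y t, hy t, rfl⟩
    rintro z ⟨yy, hyy, rfl⟩
    calc ∑ j : Fin d, chiWeight η ℓ x y t j * ℓ t (x t) yy j
        ≤ ∑ j : Fin d, chiWeight η ℓ x y t j * C :=
          Finset.sum_le_sum fun j _ => mul_le_mul_of_nonneg_left
            ((abs_le.mp (hbdd t j _ (hx t) _ hyy)).2) (hchi_pos t j).le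
      _ = C := by rw [← Finset.sum_mul, hchi_sum t, one_mul]
  rcases eq_or_lt_of_le hD0 with hDz | hDpos
  · -- degenerate case: log d = 0, i.e. d = 1
    have hd1 : d = 1 := by
      have h1 : (d:ℝ) = 1 := by
        rcases Real.log_eq_zero.mp hDz.symm with h | h | h
        · have hz : d = 0 := by exact_mod_cast h
          omega
        · exact h
        · have h1 : (1:ℝ) ≤ (d:ℝ) := by exact_mod_cast hd
          linarith
      exact_mod_cast h1
    subst hd1
    have hchi1 : ∀ (t : Fin T) (j : Fin 1), chiWeight η ℓ x y t j = 1 := by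
      intro t j
      have h0 : j = 0 := Subsingleton.elim _ _
      subst h0
      simp only [chiWeight, Fin.sum_univ_one]
      exact div_self (Real.exp_ne_zero _)
    have hmain : ∀ j : Fin 1, ∑ t, ℓ t (x t) (y t) j ≤ ∑ t, wbd t := by
      intro j
      have h0 : j = 0 := Subsingleton.elim _ _
      subst h0
      refine Finset.sum_le_sum fun t _ => ?_
      have := hkey t
      simpa [Fin.sum_univ_one, hchi1 t 0] using this
    exact le_trans (ciSup_le hmain) (le_add_of_nonneg_right (by positivity))
  · -- main case : log d > 0
    set D := Real.log d with hDdef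
    have hTpos : (0:ℝ) < T := lt_of_lt_of_le hDpos hT
    have hηpos : 0 < η := by
      rw [hη]
      exact Real.sqrt_pos.mpr (by positivity)
    have hη2 : η ^ 2 = D / (4 * T * C ^ 2) := by
      rw [hη]
      exact Real.sq_sqrt (by positivity)
    have hDe : D = 4 * T * C ^ 2 * η ^ 2 := by
      rw [eq_div_iff (by positivity : (4:ℝ) * T * C ^ 2 ≠ 0)] at hη2
      linarith
    have hηC : η * C ≤ 1 / 2 := by
      have hsq : (η * C) ^ 2 ≤ 1 / 4 := by
        have : (η * C) ^ 2 = D / (4 * T) := by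
          field_simp [hDe]
          rw [hDe]; ring
        rw [this]
        rw [div_le_iff₀ (by positivity : (0:ℝ) < 4 * T)]
        linarith [hT]
      nlinarith [mul_pos hηpos hC]
    -- extended sequences over ℕ
    set G : ℕ → Fin d → ℝ :=
      fun k j => if h : k < T then ℓ ⟨k, h⟩ (x ⟨k, h⟩) (y ⟨k, h⟩) j else 0 with hG
    set S : ℕ → Fin d → ℝ := fun n j => ∑ k ∈ Finset.range n, G k j with hS
    set W : ℕ → ℝ := fun n => ∑ j : Fin d, Real.exp (η * S n j) with hW
    set Gw : ℕ → ℝ := fun k => if h : k < T then wbd ⟨k, h⟩ else 0 with hGw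
    set Sw : ℕ → ℝ := fun n => ∑ k ∈ Finset.range n, Gw k with hSw
    have hWpos : ∀ n, 0 < W n :=
      fun n => Finset.sum_pos (fun j _ => Real.exp_pos _) Finset.univ_nonempty
    have hIio : ∀ (t : Fin T) (j : Fin d),
        ∑ s ∈ Finset.Iio t, ℓ s (x s) (y s) j = S t.val j := by
      intro t j
      rw [hS, hG]
      exact sum_Iio_fin (fun s => ℓ s (x s) (y s) j) t
    have hchiW : ∀ (t : Fin T) (j : Fin d),
        chiWeight η ℓ x y t j = Real.exp (η * S t.val j) / W t.val := by
      intro t j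
      simp only [chiWeight, hIio, hW]
    -- the one-step inequality
    have hstep : ∀ n, n < T → W (n + 1) ≤ W n * Real.exp (η * Gw n + η ^ 2 * C ^ 2) := by
      intro n hn
      set t : Fin T := ⟨n, hn⟩ with ht
      have hGwn : Gw n = wbd t := by rw [hGw]; exact dif_pos hn
      have hGn : ∀ j, G n j = ℓ t (x t) (y t) j := by
        intro j; rw [hG]; exact dif_pos hn
      have hLb : ∀ j, |ℓ t (x t) (y t) j| ≤ C := fun j => hbdd t j _ (hx t) _ (hy t)
      have hexp : ∀ j, Real.exp (η * G n j) ≤ 1 + η * G n j + η ^ 2 * C ^ 2 := by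
        intro j
        have hb : |G n j| ≤ C := by rw [hGn]; exact hLb j
        have habs : |η * G n j| ≤ 1 := by
          rw [abs_mul, abs_of_nonneg hηpos.le]
          calc η * |G n j| ≤ η * C := mul_le_mul_of_nonneg_left hb hηpos.le
            _ ≤ 1 / 2 := hηC
            _ ≤ 1 := by norm_num
        refine (exp_le_quad habs).trans ?_
        have hb2 : (G n j) ^ 2 ≤ C ^ 2 := by
          nlinarith [hb, abs_nonneg (G n j), sq_abs (G n j), neg_abs_le (G n j),
            le_abs_self (G n j)]
        nlinarith [sq_nonneg η]
      have hsum : ∑ j : Fin d, Real.exp (η * S n j) * ℓ t (x t) (y t) j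
          ≤ W n * wbd t := by
        have h1 := hkey t
        have h2 : ∑ j : Fin d, chiWeight η ℓ x y t j * ℓ t (x t) (y t) j
            = (∑ j : Fin d, Real.exp (η * S n j) * ℓ t (x t) (y t) j) / W n := by
          rw [Finset.sum_div]
          refine Finset.sum_congr rfl fun j _ => ?_
          rw [hchiW t j]
          rw [div_mul_eq_mul_div]
        rw [h2, div_le_iff₀ (hWpos n)] at h1
        linarith [h1]
      calc W (n + 1)
          = ∑ j : Fin d, Real.exp (η * S n j) * Real.exp (η * G n j) := by
            simp only [hW]
            refine Finset.sum_congr rfl fun j _ => ?_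
            rw [← Real.exp_add]
            congr 1
            simp only [hS]
            rw [Finset.sum_range_succ]
            ring
        _ ≤ ∑ j : Fin d, Real.exp (η * S n j) * (1 + η * G n j + η ^ 2 * C ^ 2) :=
            Finset.sum_le_sum fun j _ =>
              mul_le_mul_of_nonneg_left (hexp j) (Real.exp_pos _).le
        _ = W n * (1 + η ^ 2 * C ^ 2)
              + η * ∑ j : Fin d, Real.exp (η * S n j) * G n j := by
            have hterm : ∀ j : Fin d, Real.exp (η * S n j) * (1 + η * G n j + η ^ 2 * C ^ 2)
                = Real.exp (η * S n j) * (1 + η ^ 2 * C ^ 2)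
                  + η * (Real.exp (η * S n j) * G n j) := fun j => by ring
            rw [Finset.sum_congr rfl (fun j _ => hterm j), Finset.sum_add_distrib,
              ← Finset.sum_mul, ← Finset.mul_sum]
        _ ≤ W n * (1 + η ^ 2 * C ^ 2) + η * (W n * wbd t) := by
            have h3 : ∑ j : Fin d, Real.exp (η * S n j) * G n j
                = ∑ j : Fin d, Real.exp (η * S n j) * ℓ t (x t) (y t) j :=
              Finset.sum_congr rfl fun j _ => by rw [hGn]
            rw [h3]
            have := mul_le_mul_of_nonneg_left hsum hηpos.le
            linarith
        _ = W n * (1 + (η * wbd t + η ^ 2 * C ^ 2)) := by ring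
        _ ≤ W n * Real.exp (η * wbd t + η ^ 2 * C ^ 2) := by
            have := Real.add_one_le_exp (η * wbd t + η ^ 2 * C ^ 2)
            have hw := hWpos n
            nlinarith
        _ = W n * Real.exp (η * Gw n + η ^ 2 * C ^ 2) := by rw [hGwn]
    -- iterate the one-step inequality
    have hWn : ∀ n, n ≤ T →
        W n ≤ d * Real.exp (η * Sw n + n * (η ^ 2 * C ^ 2)) := by
      intro n
      induction n with
      | zero =>
          intro _
          simp [hW, hS, hSw]
      | succ n ih =>
          intro hn
          have hn' : n < T := Nat.lt_of_succ_le hn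
          calc W (n + 1) ≤ W n * Real.exp (η * Gw n + η ^ 2 * C ^ 2) := hstep n hn'
            _ ≤ (d * Real.exp (η * Sw n + n * (η ^ 2 * C ^ 2)))
                  * Real.exp (η * Gw n + η ^ 2 * C ^ 2) :=
                mul_le_mul_of_nonneg_right (ih hn'.le) (Real.exp_pos _).le
            _ = d * Real.exp (η * Sw (n + 1) + (n + 1 : ℕ) * (η ^ 2 * C ^ 2)) := by
                rw [mul_assoc, ← Real.exp_add]
                congr 1
                simp only [hSw]
                rw [Finset.sum_range_succ]
                push_cast
                ring
    -- from the potential bound to the final bound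
    have hST : ∀ j : Fin d, S T j = ∑ t, ℓ t (x t) (y t) j := by
      intro j
      simp only [hS]
      rw [← Fin.sum_univ_eq_sum_range (fun k => G k j) T]
      refine Finset.sum_congr rfl fun i _ => ?_
      simp only [hG]
      simp [i.isLt]
    have hSwT : Sw T = ∑ t, wbd t := by
      simp only [hSw]
      rw [← Fin.sum_univ_eq_sum_range Gw T]
      refine Finset.sum_congr rfl fun i _ => ?_
      simp only [hGw]
      simp [i.isLt]
    have hsqrt : Real.sqrt (T * D) = 2 * T * C * η := by
      rw [show (T:ℝ) * D = (2 * T * C * η) ^ 2 by rw [hDe]; ring]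
      exact Real.sqrt_sq (by positivity)
    refine ciSup_le fun j => ?_
    have h1 : Real.exp (η * S T j) ≤ W T :=
      Finset.single_le_sum (f := fun i => Real.exp (η * S T i))
        (fun i _ => (Real.exp_pos _).le) (Finset.mem_univ j)
    have h2 := hWn T le_rfl
    have h3 : Real.exp (η * S T j)
        ≤ d * Real.exp (η * Sw T + T * (η ^ 2 * C ^ 2)) := h1.trans h2
    have h4 : η * S T j ≤ D + (η * Sw T + T * (η ^ 2 * C ^ 2)) := by
      have hlog := Real.log_le_log (Real.exp_pos _) h3
      rwa [Real.log_exp, Real.log_mul (by positivity) (Real.exp_ne_zero _),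
        Real.log_exp] at hlog
    rw [hST j, hSwT] at h4
    rw [hsqrt]
    have h5 : η * (∑ t, ℓ t (x t) (y t) j)
        ≤ η * ((∑ t, wbd t) + 4 * C * (2 * T * C * η)) := by
      nlinarith [h4, hDe, mul_pos (mul_pos hTpos (pow_pos hC 2)) (pow_pos hηpos 2)]
    exact le_of_mul_le_mul_left h5 hηpos

end
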